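/- Let k1, k2 > 0 and consider the relieved quadratic form matrix U(β) = [[2(k1 + k1²k2)β, (k1² + 2k1k2 + 1)β − k1² − 1], [(k1² + 2k1k2 + 1)β − k1² − 1, 2((k1+k2)β − k1)]] (a symmetric 2×2 real matrix depending on β ∈ ℝ). If β > 0 and −(k1²−1)²β² + (2k1⁴ + 4k1k2 + 2)β − (k1²+1)² > 0, then U(β) is positive definite. -/

import Mathlib

open Matrix

theorem stmt_19 (k1 k2 β : ℝ) (hk1 : 0 < k1) (hk2 : 0 < k2) (hβ : 0 < β)
    (hquad : -(k1 ^ 2 - 1) ^ 2 * β ^ 2 + (2 * k1 ^ 4 + 4 * k1 * k2 + 2) * β -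
        (k1 ^ 2 + 1) ^ 2 > 0) :
    (!![2 * (k1 + k1 ^ 2 * k2) * β, (k1 ^ 2 + 2 * k1 * k2 + 1) * β - k1 ^ 2 - 1;
        (k1 ^ 2 + 2 * k1 * k2 + 1) * β - k1 ^ 2 - 1,
        2 * ((k1 + k2) * β - k1)] : Matrix (Fin 2) (Fin 2) ℝ).PosDef := by
  set a : ℝ := 2 * (k1 + k1 ^ 2 * k2) * β with ha
  set b : ℝ := (k1 ^ 2 + 2 * k1 * k2 + 1) * β - k1 ^ 2 - 1 with hb
  set c : ℝ := 2 * ((k1 + k2) * β - k1) with hc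
  have hapos : 0 < a := by positivity
  have hdet : 0 < a * c - b ^ 2 := by
    rw [ha, hb, hc]; nlinarith [sq_nonneg (k1*k2), sq_nonneg β]
  constructor
  · ext i j
    fin_cases i <;> fin_cases j <;> simp [Matrix.conjTranspose, Matrix.vecHead, Matrix.vecTail]
  · intro x hx
    have hq : (star x) ⬝ᵥ ((!![a, b; b, c] : Matrix (Fin 2) (Fin 2) ℝ) *ᵥ x)
        = a * x 0 ^ 2 + 2 * b * (x 0 * x 1) + c * x 1 ^ 2 := by
      simp [Matrix.mulVec, dotProduct, Fin.sum_univ_two]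
      ring
    have hsum : (x.sum fun i xi => x.sum fun j xj => star xi * (!![a, b; b, c] : Matrix (Fin 2) (Fin 2) ℝ) i j * xj)
        = (star ⇑x) ⬝ᵥ ((!![a, b; b, c] : Matrix (Fin 2) (Fin 2) ℝ) *ᵥ ⇑x) := by
      simp [Finsupp.sum_fintype, Matrix.mulVec, dotProduct, Fin.sum_univ_two]
      ring
    rw [hsum, hq]
    rcases eq_or_ne (x 1) 0 with h1 | h1
    · have h0 : x 0 ≠ 0 := by
        intro h0
        apply hx
        ext i; fin_cases i <;> assumption
      have : 0 < x 0 ^ 2 := by positivity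
      simp only [h1]
      nlinarith
    · have h1' : 0 < x 1 ^ 2 := by positivity
      nlinarith [sq_nonneg (a * x 0 + b * x 1), mul_pos hdet h1']
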